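/- With φ_{h,d} as above and 1 ≤ h < d, 0 ≤ s < d, the reciprocity-type recursion φ_{h,d}(s) = (d² + h² + 3hd - 3d - 3h + 1 - 6s(d+h-1-s))/(12h) - (d/h)·φ_{d mod h, h}(s mod h) holds, where in the last term d and s are replaced by their residues modulo h. -/

import Mathlib

open Finset

/-- `e(x) = exp(2πi x)`. -/
noncomputable def ee (x : ℝ) : ℂ := Complex.exp (2 * Real.pi * Complex.I * x)

def SS (h : ℤ) (d : ℕ) (s : ℤ) : ℤ :=
  ∑ a ∈ Finset.range d, (a : ℤ) * ((h * a + s) % (d : ℤ))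

lemma ee_add (x y : ℝ) : ee (x + y) = ee x * ee y := by
  simp [ee, ← Complex.exp_add]; ring_nf

lemma ee_int (n : ℤ) : ee (n : ℝ) = 1 := by
  simp only [ee]
  have : (2 : ℂ) * Real.pi * Complex.I * (n : ℝ) = (n : ℂ) * (2 * Real.pi * Complex.I) := by
    push_cast; ring
  rw [this, Complex.exp_int_mul_two_pi_mul_I]

lemma ee_nat_mul (n : ℕ) (x : ℝ) : ee ((n : ℝ) * x) = ee x ^ n := by
  simp only [ee, ← Complex.exp_nat_mul]
  congr 1; push_cast; ring

lemma ee_eq_one_iff (d : ℕ) (hd : 0 < d) (m : ℤ) :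
    ee ((m : ℝ) / d) = 1 ↔ (d : ℤ) ∣ m := by
  have hd0 : (d : ℝ) ≠ 0 := Nat.cast_ne_zero.mpr hd.ne'
  have hdC : (d : ℂ) ≠ 0 := Nat.cast_ne_zero.mpr hd.ne'
  have hne : (2 * (Real.pi : ℂ) * Complex.I) ≠ 0 := by
    simp [Real.pi_ne_zero, Complex.I_ne_zero]
  rw [ee, Complex.exp_eq_one_iff]
  constructor
  · rintro ⟨n, hn⟩
    have h1 : (((m : ℝ) / d : ℝ) : ℂ) = (n : ℂ) := by
      apply mul_left_cancel₀ hne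
      rw [hn]; ring
    have h2 : ((m : ℝ) / d : ℝ) = (n : ℝ) := by exact_mod_cast h1
    have h3 : (m : ℝ) = (n : ℝ) * d := by field_simp at h2; linarith
    refine ⟨n, ?_⟩
    have h4 : (m : ℝ) = (d : ℝ) * n := by linarith
    exact_mod_cast h4
  · rintro ⟨c, rfl⟩
    refine ⟨c, ?_⟩
    push_cast
    field_simp

lemma geom_zero {z : ℂ} (d : ℕ) (hz1 : z ≠ 1) (hzd : z ^ d = 1) :
    ∑ k ∈ range d, z ^ k = 0 := by
  rw [geom_sum_eq hz1, hzd, sub_self, zero_div]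

lemma geom_lin {z : ℂ} (d : ℕ) (hz1 : z ≠ 1) (hzd : z ^ d = 1) :
    (1 - z) * ∑ j ∈ range d, (j : ℂ) * z ^ j = -(d : ℂ) := by
  have key : ∑ j ∈ range d, (((j:ℂ)+1) * z ^ (j+1) - (j:ℂ) * z ^ j)
      = (d : ℂ) * z ^ d - 0 * z ^ 0 := by
    have := Finset.sum_range_sub (f := fun j => (j : ℂ) * z ^ j) d
    simpa using this
  have expand : ∀ j : ℕ, ((j:ℂ)+1) * z ^ (j+1) - (j:ℂ) * z ^ j
      = (j : ℂ) * z ^ j * (z - 1) + z * z ^ j := by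
    intro j; rw [pow_succ]; ring
  rw [Finset.sum_congr rfl fun j _ => expand j, Finset.sum_add_distrib,
    ← Finset.sum_mul, ← Finset.mul_sum, geom_zero d hz1 hzd, hzd] at key
  simp at key
  linear_combination -key

lemma inv_one_sub {z : ℂ} (d : ℕ) (hd : 0 < d) (hz1 : z ≠ 1) (hzd : z ^ d = 1) :
    (1 - z)⁻¹ = -(∑ j ∈ range d, (j : ℂ) * z ^ j) / d := by
  have h0 : (1 : ℂ) - z ≠ 0 := sub_ne_zero.mpr (Ne.symm hz1)
  have hdC : (d : ℂ) ≠ 0 := Nat.cast_ne_zero.mpr hd.ne'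
  have h2 : ∑ j ∈ range d, (j : ℂ) * z ^ j = (1 - z)⁻¹ * (-(d:ℂ)) := by
    have h3 : (1-z)⁻¹ * ((1-z) * ∑ j ∈ range d, (j : ℂ) * z ^ j) = (1-z)⁻¹ * (-(d:ℂ)) := by
      rw [geom_lin d hz1 hzd]
    rwa [inv_mul_cancel_left₀ h0] at h3
  rw [h2]
  field_simp

/-- The generalized Dedekind sum
`φ_{h,d}(s) = ∑_{k=1}^{d-1} e(ks/d) / ((1 - e(kh/d)) (1 - e(-k/d)))`. -/
noncomputable def phi (h : ℤ) (d : ℕ) (s : ℤ) : ℂ :=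
  ∑ k ∈ Finset.Ico 1 d,
    ee ((k : ℝ) * (s : ℝ) / d) /
      ((1 - ee ((k : ℝ) * (h : ℝ) / d)) * (1 - ee (-(k : ℝ) / d)))

lemma ee_zero : ee 0 = 1 := by simp [ee]

lemma gauss1 (n : ℕ) : 2 * ∑ i ∈ Finset.range n, (i : ℤ) = n * (n - 1) := by
  induction n with
  | zero => simp
  | succ n ih => rw [Finset.sum_range_succ]; push_cast; push_cast at ih; linarith

lemma gauss2 (n : ℕ) : 6 * ∑ i ∈ Finset.range n, (i : ℤ)^2 = n * (n - 1) * (2*n - 1) := by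
  induction n with
  | zero => simp
  | succ n ih => rw [Finset.sum_range_succ]; push_cast; push_cast at ih; nlinarith [ih]

lemma gaussIcc1 (n : ℕ) : 2 * ∑ i ∈ Finset.Icc 1 n, (i : ℤ) = n * (n + 1) := by
  induction n with
  | zero => simp
  | succ n ih =>
      rw [Finset.sum_Icc_succ_top (by omega : 1 ≤ n + 1)]
      push_cast; push_cast at ih; linarith

lemma gaussIcc2 (n : ℕ) : 6 * ∑ i ∈ Finset.Icc 1 n, (i : ℤ)^2 = n * (n + 1) * (2*n + 1) := by
  induction n with
  | zero => simp
  | succ n ih =>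
      rw [Finset.sum_Icc_succ_top (by omega : 1 ≤ n + 1)]
      push_cast; push_cast at ih; nlinarith [ih]

lemma dvd_bounded (n z : ℤ) (hd : n ∣ z) (h1 : -n < z) (h2 : z < n) : z = 0 := by
  rcases hd with ⟨c, rfl⟩
  rcases lt_trichotomy c 0 with h | h | h
  · nlinarith
  · simp [h]
  · nlinarith

lemma sum_ee (d : ℕ) (hd : 0 < d) (m : ℤ) :
    ∑ k ∈ Finset.range d, ee ((k : ℝ) * (m : ℝ) / d) = if (d:ℤ) ∣ m then (d:ℂ) else 0 := by
  have hdR : (d : ℝ) ≠ 0 := Nat.cast_ne_zero.mpr hd.ne'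
  have hz : ∀ k : ℕ, ee ((k:ℝ) * m / d) = ee ((m:ℝ)/d) ^ k := by
    intro k; rw [← ee_nat_mul]; congr 1; ring
  rw [Finset.sum_congr rfl fun k _ => hz k]
  by_cases hdvd : (d:ℤ) ∣ m
  · rw [if_pos hdvd, (ee_eq_one_iff d hd m).mpr hdvd]
    simp
  · rw [if_neg hdvd]
    apply geom_zero d
    · exact fun h1 => hdvd ((ee_eq_one_iff d hd m).mp h1)
    · rw [← ee_nat_mul]
      have h3 : (d:ℝ) * ((m:ℝ)/d) = ((m:ℤ):ℝ) := by field_simp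
      rw [h3, ee_int]

lemma sum_Ico_ee (d : ℕ) (hd : 0 < d) (m : ℤ) :
    ∑ k ∈ Finset.Ico 1 d, ee ((k : ℝ) * (m : ℝ) / d)
      = (if (d:ℤ) ∣ m then (d:ℂ) else 0) - 1 := by
  have h0 : ∑ k ∈ Finset.range d, ee ((k : ℝ) * (m : ℝ) / d)
      = ee ((0 : ℕ) * (m : ℝ) / d) + ∑ k ∈ Finset.Ico 1 d, ee ((k : ℝ) * (m : ℝ) / d) := by
    rw [Finset.range_eq_Ico]
    exact Finset.sum_eq_sum_Ico_succ_bot hd _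
  rw [sum_ee d hd m] at h0
  have : ee ((0 : ℕ) * (m : ℝ) / d) = 1 := by norm_num [ee_zero]
  rw [this] at h0
  linear_combination -h0

lemma phi_eq (h d : ℕ) (hd : 0 < d) (hcop : Nat.Coprime h d) (s : ℤ) :
    phi (h : ℤ) d s = (SS (h : ℤ) d s : ℂ) / d - ((d : ℂ) - 1)^2 / 4 := by
  have hdR : (d : ℝ) ≠ 0 := Nat.cast_ne_zero.mpr hd.ne'
  have hdC : (d : ℂ) ≠ 0 := Nat.cast_ne_zero.mpr hd.ne'
  have hdZ : (d : ℤ) ≠ 0 := Int.natCast_ne_zero.mpr hd.ne'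
  -- step 1: rewrite each term of phi as a double sum
  have step1 : ∀ k ∈ Finset.Ico 1 d,
      ee ((k : ℝ) * (s : ℝ) / d) /
        ((1 - ee ((k : ℝ) * ((h:ℤ) : ℝ) / d)) * (1 - ee (-(k : ℝ) / d)))
      = ∑ a ∈ Finset.range d, ∑ b ∈ Finset.range d,
          (a : ℂ) * (b : ℂ) * ee ((k : ℝ) * (((h:ℤ) * a - b + s : ℤ) : ℝ) / d) / (d^2 : ℂ) := by
    intro k hk
    rw [Finset.mem_Ico] at hk
    obtain ⟨hk1, hk2⟩ := hk
    have hndk : ¬ (d:ℤ) ∣ (k : ℤ) := by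
      intro hdvd
      have := Int.le_of_dvd (by exact_mod_cast hk1) hdvd
      omega
    have hndkh : ¬ (d:ℤ) ∣ ((k * h : ℕ) : ℤ) := by
      intro hdvd
      have h1 : d ∣ k * h := by exact_mod_cast hdvd
      have h2 : d ∣ k := (Nat.Coprime.dvd_of_dvd_mul_right (hcop.symm)) h1
      have := Nat.le_of_dvd (by omega) h2
      omega
    set z1 := ee ((k : ℝ) * ((h:ℤ) : ℝ) / d) with hz1def
    set z2 := ee (-(k : ℝ) / d) with hz2def
    have hz1eq : z1 = ee ((((k*h : ℕ) : ℤ) : ℝ) / d) := by rw [hz1def]; congr 1; push_cast; ring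
    have hz2eq : z2 = ee ((((-(k:ℤ)) : ℤ) : ℝ) / d) := by rw [hz2def]; congr 1; push_cast; ring
    have hz1 : z1 ≠ 1 := by
      rw [hz1eq]; intro hone; exact hndkh ((ee_eq_one_iff d hd _).mp hone)
    have hz2 : z2 ≠ 1 := by
      rw [hz2eq]; intro hone
      have := (ee_eq_one_iff d hd _).mp hone
      exact hndk ((dvd_neg).mp this)
    have hz1d : z1 ^ d = 1 := by
      rw [hz1eq, ← ee_nat_mul]
      have : (d:ℝ) * ((((k*h : ℕ) : ℤ) : ℝ) / d) = (((k*h : ℕ) : ℤ) : ℝ) := by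
        rw [mul_comm, div_mul_cancel₀ _ hdR]
      rw [this, ee_int]
    have hz2d : z2 ^ d = 1 := by
      rw [hz2eq, ← ee_nat_mul]
      have : (d:ℝ) * ((((-(k:ℤ)) : ℤ) : ℝ) / d) = (((-(k:ℤ)) : ℤ) : ℝ) := by
        rw [mul_comm, div_mul_cancel₀ _ hdR]
      rw [this, ee_int]
    have inv1 := inv_one_sub d hd hz1 hz1d
    have inv2 := inv_one_sub d hd hz2 hz2d
    have hpow1 : ∀ n : ℕ, z1 ^ n = ee ((k : ℝ) * (((h:ℤ) * n : ℤ) : ℝ) / d) := by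
      intro n; rw [hz1def, ← ee_nat_mul]; congr 1; push_cast; ring
    have hpow2 : ∀ n : ℕ, z2 ^ n = ee ((k : ℝ) * (((-(n:ℤ)) : ℤ) : ℝ) / d) := by
      intro n; rw [hz2def, ← ee_nat_mul]; congr 1; push_cast; ring
    have hmerge : ∀ a b : ℕ,
        ee ((k : ℝ) * (((h:ℤ) * a : ℤ) : ℝ) / d) * ee ((k : ℝ) * (((-(b:ℤ)) : ℤ) : ℝ) / d)
          * ee ((k : ℝ) * (s : ℝ) / d)
        = ee ((k : ℝ) * (((h:ℤ) * a - b + s : ℤ) : ℝ) / d) := by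
      intro a b; rw [← ee_add, ← ee_add]; congr 1; push_cast; ring
    rw [div_eq_mul_inv, mul_inv, inv1, inv2]
    rw [div_mul_div_comm, neg_mul_neg, Finset.sum_mul_sum]
    rw [Finset.sum_div, Finset.mul_sum]
    refine Finset.sum_congr rfl fun a _ => ?_
    rw [Finset.sum_div, Finset.mul_sum]
    refine Finset.sum_congr rfl fun b _ => ?_
    rw [hpow1 a, hpow2 b, ← hmerge a b]
    ring
  rw [phi, Finset.sum_congr rfl step1]
  rw [Finset.sum_comm]
  -- step 2: evaluate inner sums
  have step2 : ∀ a ∈ Finset.range d,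
      ∑ k ∈ Finset.Ico 1 d, ∑ b ∈ Finset.range d,
        (a : ℂ) * (b : ℂ) * ee ((k : ℝ) * (((h:ℤ) * a - b + s : ℤ) : ℝ) / d) / (d^2 : ℂ)
      = ((a : ℂ)/(d^2:ℂ)) * ((d:ℂ) * (((((h:ℤ) * a + s) % d) : ℤ) : ℂ)
          - ∑ b ∈ Finset.range d, (b:ℂ)) := by
    intro a _
    rw [Finset.sum_comm]
    have inner : ∀ b ∈ Finset.range d,
        ∑ k ∈ Finset.Ico 1 d,
          (a : ℂ) * (b : ℂ) * ee ((k : ℝ) * (((h:ℤ) * a - b + s : ℤ) : ℝ) / d) / (d^2 : ℂ)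
        = (a : ℂ) * (b : ℂ) * ((if (d:ℤ) ∣ ((h:ℤ) * a - b + s) then (d:ℂ) else 0) - 1)
            / (d^2 : ℂ) := by
      intro b _
      have hre : ∀ k : ℕ,
          (a : ℂ) * (b : ℂ) * ee ((k : ℝ) * (((h:ℤ) * a - b + s : ℤ) : ℝ) / d) / (d^2 : ℂ)
          = ((a:ℂ)*(b:ℂ)/(d^2:ℂ)) * ee ((k : ℝ) * (((h:ℤ) * a - b + s : ℤ) : ℝ) / d) :=
        fun k => by ring
      rw [Finset.sum_congr rfl fun k _ => hre k, ← Finset.mul_sum, sum_Ico_ee d hd _]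
      ring
    rw [Finset.sum_congr rfl inner]
    -- key : weighted sum over b picks out the residue
    have key : ∑ b ∈ Finset.range d,
        (b:ℂ) * (if (d:ℤ) ∣ ((h:ℤ) * a - b + s) then (d:ℂ) else 0)
        = (d:ℂ) * (((((h:ℤ) * a + s) % d) : ℤ) : ℂ) := by
      set r : ℤ := ((h:ℤ) * a + s) % d with hrdef
      have hr0 : 0 ≤ r := Int.emod_nonneg _ hdZ
      have hrd : r < d := Int.emod_lt_of_pos _ (by exact_mod_cast hd)
      set b₀ : ℕ := r.toNat with hb0def
      have hb0cast : (b₀ : ℤ) = r := Int.toNat_of_nonneg hr0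
      have hb0lt : b₀ < d := by omega
      have hdvdr : (d:ℤ) ∣ ((h:ℤ) * a + s - r) := by
        rw [hrdef, Int.emod_def]; exact ⟨((h:ℤ) * a + s) / d, by ring⟩
      rw [Finset.sum_eq_single b₀]
      · have hcond : (d:ℤ) ∣ ((h:ℤ) * a - b₀ + s) := by
          rw [hb0cast]
          have : (h:ℤ) * a - r + s = ((h:ℤ) * a + s - r) := by ring
          rw [this]; exact hdvdr
        have hbC : ((b₀ : ℕ) : ℂ) = ((r : ℤ) : ℂ) := by exact_mod_cast hb0cast
        rw [if_pos hcond, hbC]; ring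
      · intro b hb hbne
        rw [Finset.mem_range] at hb
        have hcond : ¬ (d:ℤ) ∣ ((h:ℤ) * a - b + s) := by
          intro hdvd
          have hdiff : (d:ℤ) ∣ (r - b) := by
            have h1 : (d:ℤ) ∣ (((h:ℤ) * a + s - r) - ((h:ℤ) * a - b + s)) := dvd_sub hdvdr hdvd
            have h2 : ((h:ℤ) * a + s - r) - ((h:ℤ) * a - b + s) = (b:ℤ) - r := by ring
            rw [h2] at h1
            exact (dvd_neg).mp (by rw [neg_sub]; exact h1)
          have : r - b = 0 := dvd_bounded _ _ hdiff (by omega) (by omega)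
          omega
        rw [if_neg hcond, mul_zero]
      · intro habs
        exact absurd (Finset.mem_range.mpr hb0lt) habs
    have expand : ∑ b ∈ Finset.range d,
        (a : ℂ) * (b : ℂ) * ((if (d:ℤ) ∣ ((h:ℤ) * a - b + s) then (d:ℂ) else 0) - 1) / (d^2 : ℂ)
        = ((a:ℂ)/(d^2:ℂ)) * (∑ b ∈ Finset.range d,
            (b:ℂ) * (if (d:ℤ) ∣ ((h:ℤ) * a - b + s) then (d:ℂ) else 0))
          - ((a:ℂ)/(d^2:ℂ)) * ∑ b ∈ Finset.range d, (b:ℂ) := by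
      rw [Finset.mul_sum, Finset.mul_sum, ← Finset.sum_sub_distrib]
      refine Finset.sum_congr rfl fun b _ => ?_
      ring
    rw [expand, key]
    ring
  rw [Finset.sum_congr rfl step2]
  -- step 3: final assembly
  set C : ℂ := ∑ b ∈ Finset.range d, (b:ℂ) with hCdef
  have hC : 2 * C = (d:ℂ) * ((d:ℂ) - 1) := by
    have h1 := gauss1 d
    have h2 : C = ((∑ i ∈ Finset.range d, (i:ℤ) : ℤ) : ℂ) := by rw [hCdef]; push_cast; rfl
    rw [h2]
    exact_mod_cast congrArg (Int.cast : ℤ → ℂ) h1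
  have hSS : ∑ a ∈ Finset.range d, (a:ℂ) * (((((h:ℤ) * a + s) % d) : ℤ) : ℂ)
      = ((SS (h:ℤ) d s : ℤ) : ℂ) := by
    rw [SS]; push_cast; rfl
  have hC' : C = (d:ℂ) * ((d:ℂ) - 1) / 2 := by linear_combination hC / 2
  have expand2 : ∑ a ∈ Finset.range d,
      ((a : ℂ)/(d^2:ℂ)) * ((d:ℂ) * (((((h:ℤ) * a + s) % d) : ℤ) : ℂ) - C)
      = ((d:ℂ)/(d^2:ℂ)) * (∑ a ∈ Finset.range d,
          (a:ℂ) * (((((h:ℤ) * a + s) % d) : ℤ) : ℂ))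
        - (C/(d^2:ℂ)) * C := by
    rw [Finset.mul_sum]
    nth_rewrite 3 [hCdef]
    rw [Finset.mul_sum, ← Finset.sum_sub_distrib]
    refine Finset.sum_congr rfl fun a _ => ?_
    ring
  have e1 : (d:ℂ)/(d:ℂ)^2 * ((SS ((h:ℕ):ℤ) d s : ℤ) : ℂ) = ((SS ((h:ℕ):ℤ) d s : ℤ) : ℂ)/(d:ℂ) := by
    field_simp
  have e2 : C/(d:ℂ)^2 * C = ((d:ℂ)-1)^2/4 := by
    rw [hC']; field_simp; ring
  rw [expand2, hSS]
  linear_combination e1 - e2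

set_option maxHeartbeats 1000000 in
lemma lemB (d h : ℕ) (hh1 : 1 ≤ h) (hhd : h < d) (hcop : Nat.Coprime h d)
    (s : ℤ) (hs0 : 0 ≤ s) (hsd : s < (d:ℤ)) :
    12 * (h:ℤ)^2 * SS (h:ℤ) d s + 12 * (d:ℤ)^2 * SS ((d % h : ℕ) : ℤ) h (s % (h:ℤ))
      = (d:ℤ) * h * ((d:ℤ)^2 + (h:ℤ)^2 + 3*h*d - 3*d - 3*h + 1 - 6*s*((d:ℤ)+(h:ℤ)-1-s))
        + 3*(d:ℤ)^2*h*((h:ℤ)-1)^2 + 3*(h:ℤ)^2*d*((d:ℤ)-1)^2 := by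
  have hdpos : 0 < d := by omega
  have hdZ : (0:ℤ) < (d:ℤ) := by exact_mod_cast hdpos
  have hhZ : (0:ℤ) < (h:ℤ) := by exact_mod_cast hh1
  have hhne : (h:ℤ) ≠ 0 := hhZ.ne'
  have hdne : (d:ℤ) ≠ 0 := hdZ.ne'
  -- basic objects
  set m : ℕ → ℤ := fun b => ((d:ℤ)*b - s - 1) / h with hm
  set ρ : ℕ → ℤ := fun b => ((d:ℤ)*b - s - 1) % h with hρ
  have hmρ : ∀ b : ℕ, (h:ℤ) * m b + ρ b = (d:ℤ)*b - s - 1 := by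
    intro b; rw [hm, hρ]; simp only; exact Int.mul_ediv_add_emod _ _
  have hρ0 : ∀ b : ℕ, 0 ≤ ρ b := by
    intro b; rw [hρ]; simp only; exact Int.emod_nonneg _ hhne
  have hρlt : ∀ b : ℕ, ρ b < h := by
    intro b; rw [hρ]; simp only; exact Int.emod_lt_of_pos _ hhZ
  set T : ℤ := ∑ a ∈ Finset.range d, (a:ℤ) * (((h:ℤ)*a + s)/d) with hT
  set M : ℤ := ∑ b ∈ Finset.Icc 1 h, m b with hM
  set Q : ℤ := ∑ b ∈ Finset.Icc 1 h, (m b)^2 with hQ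
  set R1 : ℤ := ∑ b ∈ Finset.Icc 1 h, ρ b with hR1
  set R2 : ℤ := ∑ b ∈ Finset.Icc 1 h, (ρ b)^2 with hR2
  set U : ℤ := ∑ b ∈ Finset.Icc 1 h, (m b * ρ b) with hU
  set V : ℤ := ∑ b ∈ Finset.Icc 1 h, ((b:ℤ) * ρ b) with hV
  set Sig1 : ℤ := ∑ a ∈ Finset.range d, (a:ℤ) with hSig1
  set Sig2 : ℤ := ∑ a ∈ Finset.range d, (a:ℤ)^2 with hSig2
  set B1 : ℤ := ∑ b ∈ Finset.Icc 1 h, (b:ℤ) with hB1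
  set B2 : ℤ := ∑ b ∈ Finset.Icc 1 h, (b:ℤ)^2 with hB2
  set W : ℤ := ∑ b ∈ Finset.Icc 1 (h-1), ((b:ℤ) * ρ b) with hW
  set Rw : ℤ := ∑ b ∈ Finset.Icc 1 (h-1), ρ b with hRw
  set Bw : ℤ := ∑ b ∈ Finset.Icc 1 (h-1), (b:ℤ) with hBw
  -- Gauss facts
  have g1 : 2 * Sig1 = (d:ℤ) * ((d:ℤ)-1) := gauss1 d
  have g2 : 6 * Sig2 = (d:ℤ) * ((d:ℤ)-1) * (2*(d:ℤ)-1) := gauss2 d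
  have g3 : 2 * B1 = (h:ℤ) * ((h:ℤ)+1) := gaussIcc1 h
  have g4 : 6 * B2 = (h:ℤ) * ((h:ℤ)+1) * (2*(h:ℤ)+1) := gaussIcc2 h
  have bwv : 2 * Bw = ((h:ℤ)-1) * h := by
    have := gaussIcc1 (h-1)
    rw [hBw]
    push_cast [Nat.cast_sub hh1] at this ⊢
    linarith
  -- E1
  have E1 : SS (h:ℤ) d s = (h:ℤ)*Sig2 + s*Sig1 - (d:ℤ)*T := by
    rw [SS, hSig2, hSig1, hT, Finset.mul_sum, Finset.mul_sum, Finset.mul_sum,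
      ← Finset.sum_add_distrib, ← Finset.sum_sub_distrib]
    refine Finset.sum_congr rfl fun a _ => ?_
    rw [Int.emod_def]
    ring
  -- E2
  have hqle : ∀ a : ℕ, a ∈ Finset.range d → 0 ≤ ((h:ℤ)*a + s)/d ∧ ((h:ℤ)*a + s)/d ≤ h := by
    intro a ha
    rw [Finset.mem_range] at ha
    have haZ : (a:ℤ) < d := by exact_mod_cast ha
    have h0 : (0:ℤ) ≤ (h:ℤ)*a + s := by positivity
    constructor
    · exact Int.ediv_nonneg h0 hdZ.le
    · have : ((h:ℤ)*a + s)/d < (h:ℤ) + 1 := by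
        rw [Int.ediv_lt_iff_lt_mul hdZ]
        nlinarith
      omega
  have hcount : ∀ q:ℤ, 0 ≤ q → q ≤ h →
      ∑ b ∈ Finset.Icc 1 h, (if (b:ℤ) ≤ q then (1:ℤ) else 0) = q := by
    intro q h0 hq
    have hfil : (Finset.Icc 1 h).filter (fun b : ℕ => (b:ℤ) ≤ q) = Finset.Icc 1 q.toNat := by
      ext b; simp only [Finset.mem_filter, Finset.mem_Icc]; omega
    rw [Finset.sum_ite, Finset.sum_const_zero, add_zero, Finset.sum_const, hfil,
      Nat.card_Icc, nsmul_eq_mul, mul_one]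
    omega
  have hq_eq : ∀ a : ℕ, a ∈ Finset.range d → (a:ℤ)*(((h:ℤ)*a + s)/d)
      = ∑ b ∈ Finset.Icc 1 h, (if (d:ℤ)*b ≤ (h:ℤ)*a + s then (a:ℤ) else 0) := by
    intro a ha
    obtain ⟨hq0, hqh⟩ := hqle a ha
    have hcond : ∀ b:ℕ, ((d:ℤ)*b ≤ (h:ℤ)*a + s) ↔ ((b:ℤ) ≤ ((h:ℤ)*a + s)/d) := by
      intro b
      rw [Int.le_ediv_iff_mul_le hdZ]
      constructor <;> intro hx <;> linarith [mul_comm (b:ℤ) (d:ℤ)]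
    calc (a:ℤ)*(((h:ℤ)*a + s)/d)
        = (a:ℤ) * ∑ b ∈ Finset.Icc 1 h, (if (b:ℤ) ≤ ((h:ℤ)*a + s)/d then (1:ℤ) else 0) := by
          rw [hcount _ hq0 hqh]
      _ = ∑ b ∈ Finset.Icc 1 h, (if (d:ℤ)*b ≤ (h:ℤ)*a + s then (a:ℤ) else 0) := by
          rw [Finset.mul_sum]
          refine Finset.sum_congr rfl fun b _ => ?_
          simp only [hcond b]
          split_ifs <;> ring
  have hT2 : T = ∑ b ∈ Finset.Icc 1 h, ∑ a ∈ Finset.range d,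
      (if (d:ℤ)*b ≤ (h:ℤ)*a + s then (a:ℤ) else 0) := by
    rw [hT, Finset.sum_congr rfl hq_eq, Finset.sum_comm]
  have hmb0 : ∀ b : ℕ, b ∈ Finset.Icc 1 h → 0 ≤ m b := by
    intro b hb
    rw [Finset.mem_Icc] at hb
    have hb1 : (1:ℤ) ≤ (b:ℤ) := by exact_mod_cast hb.1
    have hnum : (0:ℤ) ≤ (d:ℤ)*b - s - 1 := by nlinarith
    have h2 := Int.ediv_nonneg hnum hhZ.le
    rw [hm]; simpa using h2
  have hmbd : ∀ b : ℕ, b ∈ Finset.Icc 1 h → m b < d := by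
    intro b hb
    rw [Finset.mem_Icc] at hb
    have hb2 : (b:ℤ) ≤ (h:ℤ) := by exact_mod_cast hb.2
    rw [hm]
    simp only
    rw [Int.ediv_lt_iff_lt_mul hhZ]
    nlinarith
  have hinner : ∀ b : ℕ, b ∈ Finset.Icc 1 h →
      2 * ∑ a ∈ Finset.range d, (if (d:ℤ)*b ≤ (h:ℤ)*a + s then (a:ℤ) else 0)
      = (d:ℤ)*((d:ℤ)-1) - m b * (m b + 1) := by
    intro b hb
    have h0 := hmb0 b hb
    have hd' := hmbd b hb
    have hn : ((m b).toNat : ℤ) = m b := Int.toNat_of_nonneg h0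
    have hcond2 : ∀ a:ℕ, ((d:ℤ)*b ≤ (h:ℤ)*a + s) ↔ ((m b).toNat < a) := by
      intro a
      have hiff : m b < (a:ℤ) ↔ (d:ℤ)*b - s - 1 < (a:ℤ)*h := by
        rw [hm]; simp only; rw [Int.ediv_lt_iff_lt_mul hhZ]
      constructor
      · intro hx
        have : (d:ℤ)*b - s - 1 < (a:ℤ)*h := by linarith [mul_comm (a:ℤ) (h:ℤ)]
        have := hiff.mpr this
        omega
      · intro hx
        have hmba : m b < (a:ℤ) := by omega
        have := hiff.mp hmba
        linarith [mul_comm (a:ℤ) (h:ℤ)]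
    have hfil2 : (Finset.range d).filter (fun a => (m b).toNat < a)
        = Finset.Ico ((m b).toNat + 1) d := by
      ext a; simp only [Finset.mem_filter, Finset.mem_range, Finset.mem_Ico]; omega
    have hstep : ∑ a ∈ Finset.range d, (if (d:ℤ)*b ≤ (h:ℤ)*a + s then (a:ℤ) else 0)
        = ∑ a ∈ Finset.Ico ((m b).toNat + 1) d, (a:ℤ) := by
      rw [← hfil2, Finset.sum_filter]
      refine Finset.sum_congr rfl fun a _ => ?_
      simp only [hcond2 a]
    rw [hstep, Finset.sum_Ico_eq_sub _ (by omega : (m b).toNat + 1 ≤ d)]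
    have gd := gauss1 d
    have gn := gauss1 ((m b).toNat + 1)
    push_cast at gn
    rw [hn] at gn
    linear_combination gd - gn
  have E2 : 2*T = (h:ℤ)*((d:ℤ)*((d:ℤ)-1)) - Q - M := by
    rw [hT2, Finset.mul_sum, Finset.sum_congr rfl hinner, Finset.sum_sub_distrib,
      Finset.sum_const, Nat.card_Icc, nsmul_eq_mul]
    have : ∑ b ∈ Finset.Icc 1 h, m b * (m b + 1) = Q + M := by
      rw [hQ, hM, ← Finset.sum_add_distrib]
      exact Finset.sum_congr rfl fun b _ => by ring
    rw [this]
    push_cast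
    ring
  -- E3
  have E3 : (h:ℤ)*M + R1 = (d:ℤ)*B1 - (h:ℤ)*(s+1) := by
    have step : (h:ℤ)*M + R1 = ∑ b ∈ Finset.Icc 1 h, ((d:ℤ)*b - s - 1) := by
      rw [hM, hR1, Finset.mul_sum, ← Finset.sum_add_distrib]
      exact Finset.sum_congr rfl fun b _ => hmρ b
    rw [step, Finset.sum_sub_distrib, Finset.sum_sub_distrib, ← Finset.mul_sum,
      Finset.sum_const, Finset.sum_const, Nat.card_Icc, nsmul_eq_mul, nsmul_eq_mul, ← hB1]
    push_cast
    ring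
  -- E4
  have E4 : (h:ℤ)^2*Q = (d:ℤ)^2*B2 - 2*(d:ℤ)*(s+1)*B1 + (h:ℤ)*(s+1)^2 - 2*(h:ℤ)*U - R2 := by
    have step : (h:ℤ)^2*Q = ∑ b ∈ Finset.Icc 1 h,
        ((d:ℤ)^2*(b:ℤ)^2 - 2*(d:ℤ)*(s+1)*(b:ℤ) + (s+1)^2 - 2*(h:ℤ)*(m b * ρ b) - (ρ b)^2) := by
      rw [hQ, Finset.mul_sum]
      refine Finset.sum_congr rfl fun b _ => ?_
      linear_combination ((h:ℤ)*m b + ρ b + ((d:ℤ)*b - s - 1)) * (hmρ b)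
    rw [step, Finset.sum_sub_distrib, Finset.sum_sub_distrib, Finset.sum_add_distrib,
      Finset.sum_sub_distrib, ← Finset.mul_sum, ← Finset.mul_sum, ← Finset.mul_sum,
      Finset.sum_const, Nat.card_Icc, nsmul_eq_mul, ← hB2, ← hB1, ← hU, ← hR2]
    push_cast
    ring
  -- E5
  have E5 : (h:ℤ)*U = (d:ℤ)*V - (s+1)*R1 - R2 := by
    have step : (h:ℤ)*U = ∑ b ∈ Finset.Icc 1 h,
        ((d:ℤ)*((b:ℤ)*ρ b) - (s+1)*ρ b - (ρ b)^2) := by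
      rw [hU, Finset.mul_sum]
      refine Finset.sum_congr rfl fun b _ => ?_
      linear_combination (ρ b) * (hmρ b)
    rw [step, Finset.sum_sub_distrib, Finset.sum_sub_distrib, ← Finset.mul_sum,
      ← Finset.mul_sum, ← hV, ← hR1, ← hR2]
  -- residues bijection
  have hco : IsCoprime (h:ℤ) (d:ℤ) := by
    rw [Int.isCoprime_iff_gcd_eq_one]
    exact_mod_cast hcop
  have hbij : ∀ f : ℤ → ℤ, ∑ b ∈ Finset.Icc 1 h, f (ρ b) = ∑ j ∈ Finset.range h, f (j:ℤ) := by
    intro f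
    have hmaps : ∀ b ∈ Finset.Icc 1 h, (ρ b).toNat ∈ Finset.range h := by
      intro b _
      rw [Finset.mem_range]
      have := hρ0 b; have := hρlt b
      omega
    have hinj : ∀ b₁ ∈ Finset.Icc 1 h, ∀ b₂ ∈ Finset.Icc 1 h,
        (ρ b₁).toNat = (ρ b₂).toNat → b₁ = b₂ := by
      intro b₁ hb₁ b₂ hb₂ heq
      rw [Finset.mem_Icc] at hb₁ hb₂
      have hρeq : ρ b₁ = ρ b₂ := by
        have := hρ0 b₁; have := hρ0 b₂; omega
      have hdvd : (h:ℤ) ∣ (d:ℤ) * ((b₁:ℤ) - (b₂:ℤ)) := by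
        refine ⟨m b₁ - m b₂, ?_⟩
        have h1 := hmρ b₁; have h2 := hmρ b₂
        rw [hρeq] at h1
        linarith [h1, h2]
      have hdvd2 : (h:ℤ) ∣ ((b₁:ℤ) - (b₂:ℤ)) := hco.dvd_of_dvd_mul_left hdvd
      have := dvd_bounded (h:ℤ) _ hdvd2 (by omega) (by omega)
      omega
    refine Finset.sum_bij (fun b _ => (ρ b).toNat) hmaps ?_ ?_ ?_
    · intro b₁ hb₁ b₂ hb₂ heq; exact hinj b₁ hb₁ b₂ hb₂ heq
    · intro j hj
      obtain ⟨b, hb, hbe⟩ := Finset.surj_on_of_inj_on_of_card_le (fun b _ => (ρ b).toNat)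
        hmaps (fun a₁ a₂ ha₁ ha₂ he => hinj a₁ ha₁ a₂ ha₂ he)
        (by simp [Nat.card_Icc]) j hj
      exact ⟨b, hb, hbe.symm⟩
    · intro b hb
      rw [Int.toNat_of_nonneg (hρ0 b)]
  have r1v : 2*R1 = (h:ℤ)*((h:ℤ)-1) := by
    have := hbij (fun x => x)
    rw [hR1]
    rw [this]
    exact gauss1 h
  have r2v : 6*R2 = (h:ℤ)*((h:ℤ)-1)*(2*(h:ℤ)-1) := by
    have := hbij (fun x => x^2)
    rw [hR2]
    rw [this]
    exact gauss2 h
  -- negation mod lemma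
  have hneg : ∀ y:ℤ, (-y-1) % h = (h:ℤ) - 1 - y % h := by
    intro y
    have hy0 : 0 ≤ y % h := Int.emod_nonneg _ hhne
    have hyh : y % h < h := Int.emod_lt_of_pos _ hhZ
    have hA : (-y-1) % (h:ℤ) = ((h:ℤ) - 1 - y % h) % h := by
      have : ((h:ℤ) - 1 - y % h) - (-y-1) = (h:ℤ) * (1 + y / h) := by
        rw [Int.emod_def]; ring
      exact Int.modEq_iff_dvd.mpr ⟨1 + y / h, this⟩
    rw [hA, Int.emod_eq_of_lt (by omega) (by omega)]
  -- the inner SS sum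
  have SS2eq : SS ((d % h : ℕ) : ℤ) h (s % (h:ℤ))
      = ∑ c ∈ Finset.range h, (c:ℤ) * (((d:ℤ)*c + s) % h) := by
    rw [SS]
    refine Finset.sum_congr rfl fun c _ => ?_
    congr 1
    have hcast : ((d % h : ℕ):ℤ) = (d:ℤ) % (h:ℤ) := Int.natCast_mod d h
    rw [hcast]
    have hd1 : ((d:ℤ) % h) ≡ (d:ℤ) [ZMOD (h:ℤ)] := Int.emod_emod_of_dvd _ dvd_rfl
    have hs1 : (s % (h:ℤ)) ≡ s [ZMOD (h:ℤ)] := Int.emod_emod_of_dvd _ dvd_rfl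
    exact (hd1.mul_right (c:ℤ)).add hs1
    -- drop c = 0
  have hdrop : ∑ c ∈ Finset.range h, (c:ℤ) * (((d:ℤ)*c + s) % h)
      = ∑ c ∈ Finset.Icc 1 (h-1), (c:ℤ) * (((d:ℤ)*c + s) % h) := by
    have hins : Finset.range h = insert 0 (Finset.Icc 1 (h-1)) := by
      ext c; simp only [Finset.mem_range, Finset.mem_insert, Finset.mem_Icc]; omega
    rw [hins, Finset.sum_insert (by simp)]
    simp
  -- reflection pointwise
  have hρeval : ∀ b : ℕ, ρ b = ((d:ℤ)*b - s - 1) % h := by intro b; rw [hρ]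
  have hσ : ∀ b : ℕ, b ∈ Finset.Icc 1 (h-1) →
      ((d:ℤ)*((h-b : ℕ):ℤ) + s) % h = (h:ℤ) - 1 - ρ b := by
    intro b hb
    rw [Finset.mem_Icc] at hb
    have hble : b ≤ h := by omega
    have hcast : ((h - b : ℕ):ℤ) = (h:ℤ) - (b:ℤ) := by
      push_cast [Nat.cast_sub hble]; ring
    have hmod : ((d:ℤ)*((h-b : ℕ):ℤ) + s) ≡ (-(((d:ℤ)*b - s - 1)) - 1) [ZMOD (h:ℤ)] := by
      refine Int.modEq_iff_dvd.mpr ⟨-(d:ℤ), ?_⟩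
      rw [hcast]; ring
    calc ((d:ℤ)*((h-b : ℕ):ℤ) + s) % h
        = (-(((d:ℤ)*b - s - 1)) - 1) % h := hmod
      _ = (h:ℤ) - 1 - ((d:ℤ)*b - s - 1) % h := hneg _
      _ = (h:ℤ) - 1 - ρ b := by rw [hρeval b]
  -- reflection bijection
  have hrefl : ∑ c ∈ Finset.Icc 1 (h-1), (c:ℤ) * (((d:ℤ)*c + s) % h)
      = ∑ b ∈ Finset.Icc 1 (h-1), ((h:ℤ) - b) * ((h:ℤ) - 1 - ρ b) := by
    refine Finset.sum_nbij' (i := fun c => h - c) (j := fun b => h - b) ?_ ?_ ?_ ?_ ?_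
    · intro c hc; simp only [Finset.mem_Icc] at hc ⊢; omega
    · intro b hb; simp only [Finset.mem_Icc] at hb ⊢; omega
    · intro c hc; simp only [Finset.mem_Icc] at hc; show h - (h - c) = c; omega
    · intro b hb; simp only [Finset.mem_Icc] at hb; show h - (h - b) = b; omega
    · intro c hc
      rw [Finset.mem_Icc] at hc
      show (c:ℤ) * (((d:ℤ)*c + s) % h)
        = ((h:ℤ) - ((h - c : ℕ):ℤ)) * ((h:ℤ) - 1 - ρ (h - c))
      have h1 : h - (h - c) = c := by omega
      have h2 := hσ (h - c) (by rw [Finset.mem_Icc]; omega)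
      rw [h1] at h2
      rw [h2]
      have h3 : ((h - c : ℕ):ℤ) = (h:ℤ) - (c:ℤ) := by
        push_cast [Nat.cast_sub (by omega : c ≤ h)]; ring
      rw [h3]
      ring
  -- splitting off the top index
  have hsplitIcc : Finset.Icc 1 h = insert h (Finset.Icc 1 (h-1)) := by
    ext b; simp only [Finset.mem_Icc, Finset.mem_insert]; omega
  have hnotmem : h ∉ Finset.Icc 1 (h-1) := by
    simp only [Finset.mem_Icc]; omega
  have Vsplit : V = W + (h:ℤ) * ρ h := by
    rw [hV, hsplitIcc, Finset.sum_insert hnotmem, ← hW]; ring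
  have R1split : R1 = Rw + ρ h := by
    rw [hR1, hsplitIcc, Finset.sum_insert hnotmem, ← hRw]; ring
  -- value of ρ h
  have ρhval : ρ h = (h:ℤ) - 1 - s % h := by
    have hmod : ((d:ℤ)*h - s - 1) ≡ (-s - 1) [ZMOD (h:ℤ)] :=
      Int.modEq_iff_dvd.mpr ⟨-(d:ℤ), by ring⟩
    calc ρ h = ((d:ℤ)*h - s - 1) % h := hρeval h
      _ = (-s - 1) % h := hmod
      _ = (h:ℤ) - 1 - s % h := hneg s
  -- E7a
  have E7a : SS ((d % h : ℕ):ℤ) h (s % (h:ℤ))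
      = (h:ℤ)*((h:ℤ)-1)*((h:ℤ)-1) - (h:ℤ)*Rw - ((h:ℤ)-1)*Bw + W := by
    rw [SS2eq, hdrop, hrefl]
    have expand : ∀ b ∈ Finset.Icc 1 (h-1), ((h:ℤ) - b) * ((h:ℤ) - 1 - ρ b)
        = (h:ℤ)*((h:ℤ)-1) - (h:ℤ)*ρ b - ((h:ℤ)-1)*(b:ℤ) + (b:ℤ)*ρ b := fun b _ => by ring
    rw [Finset.sum_congr rfl expand, Finset.sum_add_distrib, Finset.sum_sub_distrib,
      Finset.sum_sub_distrib]
    have s1 : ∑ _b ∈ Finset.Icc 1 (h-1), ((h:ℤ)*((h:ℤ)-1)) = ((h:ℤ)-1)*((h:ℤ)*((h:ℤ)-1)) := by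
      rw [Finset.sum_const, Nat.card_Icc, nsmul_eq_mul]
      simp only [Nat.add_sub_cancel]
      push_cast [Nat.cast_sub hh1]
      ring
    have s2 : ∑ b ∈ Finset.Icc 1 (h-1), (h:ℤ)*ρ b = (h:ℤ)*Rw := by
      rw [hRw, Finset.mul_sum]
    have s3 : ∑ b ∈ Finset.Icc 1 (h-1), ((h:ℤ)-1)*(b:ℤ) = ((h:ℤ)-1)*Bw := by
      rw [hBw, Finset.mul_sum]
    have s4 : ∑ b ∈ Finset.Icc 1 (h-1), ((b:ℤ)*ρ b) = W := hW.symm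
    rw [s1, s2, s3, s4]
    ring
  -- final assembly
  linear_combination (12*(h:ℤ)^2) * E1 + 2*(h:ℤ)^3 * g2 + 6*(h:ℤ)^2*s * g1
    - 6*(h:ℤ)^2*(d:ℤ) * E2 + 6*(d:ℤ) * E4 + 6*(h:ℤ)*(d:ℤ) * E3 - 12*(d:ℤ) * E5
    + (d:ℤ)^3 * g4 + (3*(h:ℤ) - 6*s - 6)*(d:ℤ)^2 * g3
    + (6*(d:ℤ)*(s+1) - 3*(h:ℤ)*(d:ℤ) - 6*(d:ℤ)^2*(h:ℤ)) * r1v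
    + (d:ℤ) * r2v - 12*(d:ℤ)^2 * Vsplit + 12*(d:ℤ)^2 * E7a
    + 12*(d:ℤ)^2*(h:ℤ) * R1split - 6*(d:ℤ)^2*((h:ℤ)-1) * bwv

theorem phi_reciprocity (d h : ℕ) (hh1 : 1 ≤ h) (hhd : h < d) (hcop : Nat.Coprime h d)
    (s : ℤ) (hs0 : 0 ≤ s) (hsd : s < d) :
    phi (h : ℤ) d s =
      ((d : ℂ) ^ 2 + (h : ℂ) ^ 2 + 3 * h * d - 3 * d - 3 * h + 1
          - 6 * (s : ℂ) * ((d : ℂ) + (h : ℂ) - 1 - (s : ℂ))) / (12 * h)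
        - ((d : ℂ) / h) * phi ((d % h : ℕ) : ℤ) h (s % (h : ℤ)) := by
  have hd : 0 < d := by omega
  have hcop2 : Nat.Coprime (d % h) h := by
    have hrec : Nat.gcd h d = Nat.gcd (d % h) h := Nat.gcd_rec h d
    unfold Nat.Coprime at hcop ⊢
    omega
  have h1 := phi_eq h d hd hcop s
  have h2 := phi_eq (d % h) h (by omega) hcop2 (s % (h:ℤ))
  have key := lemB d h hh1 hhd hcop s hs0 hsd
  have hhC : (h:ℂ) ≠ 0 := Nat.cast_ne_zero.mpr (by omega)
  have hdC : (d:ℂ) ≠ 0 := Nat.cast_ne_zero.mpr hd.ne'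
  have keyC : 12 * (h:ℂ)^2 * ((SS (h:ℤ) d s : ℤ) : ℂ)
        + 12 * (d:ℂ)^2 * ((SS ((d % h : ℕ) : ℤ) h (s % (h:ℤ)) : ℤ) : ℂ)
      = (d:ℂ) * h * ((d:ℂ)^2 + (h:ℂ)^2 + 3*(h:ℂ)*(d:ℂ) - 3*(d:ℂ) - 3*(h:ℂ) + 1
            - 6*(s:ℂ)*((d:ℂ)+(h:ℂ)-1-(s:ℂ)))
        + 3*(d:ℂ)^2*(h:ℂ)*((h:ℂ)-1)^2 + 3*(h:ℂ)^2*(d:ℂ)*((d:ℂ)-1)^2 := by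
    exact_mod_cast congrArg (Int.cast : ℤ → ℂ) key
  rw [h1, h2]
  set x : ℂ := ((SS (h:ℤ) d s : ℤ) : ℂ) with hx
  set y : ℂ := ((SS ((d % h : ℕ) : ℤ) h (s % (h:ℤ)) : ℤ) : ℂ) with hy
  field_simp
  linear_combination (4:ℂ) * keyC
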